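/- Let a_0, a_1, b_0, b_1, Q be real numbers with a_0 > 0 and a_0·Q − b_0² > 0, and set F = b_1 − b_0·a_1/a_0. Define f : ℝ → ℝ by f(ν) = −(b_1 + ν·a_1)/(Q + 2·b_0·ν + a_0·ν²)^{1/2} (the expression under the square root is positive for every ν since its discriminant is negative). If F < 0, then a_0·b_1 − a_1·b_0 ≠ 0, the function f attains its supremum over ℝ at ν* = (a_1·Q − b_0·b_1)/(a_0·b_1 − a_1·b_0), and the maximum value is f(ν*) = ( a_1²/a_0 + F²/(Q − b_0²/a_0) )^{1/2}. -/

import Mathlib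

set_option maxHeartbeats 1000000 in
/-- with `a₀ > 0`, `a₀Q - b₀² > 0` and Futaki invariant
`F = b₁ - b₀a₁/a₀ < 0`, the function
`f(ν) = -(b₁ + νa₁)/(Q + 2b₀ν + a₀ν²)^{1/2}` attains its supremum over ℝ at
`ν* = (a₁Q - b₀b₁)/(a₀b₁ - a₁b₀)` (whose denominator is nonzero), with maximum value
`f(ν*) = (a₁²/a₀ + F²/(Q - b₀²/a₀))^{1/2}`. -/
theorem statement3 (a0 a1 b0 b1 Q : ℝ) (ha0 : 0 < a0)
    (hdisc : 0 < a0 * Q - b0 ^ 2)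
    (f : ℝ → ℝ)
    (hf : ∀ ν : ℝ, f ν = -(b1 + ν * a1) / Real.sqrt (Q + 2 * b0 * ν + a0 * ν ^ 2))
    (hF : b1 - b0 * a1 / a0 < 0) :
    a0 * b1 - a1 * b0 ≠ 0 ∧
    IsGreatest (Set.range f) (f ((a1 * Q - b0 * b1) / (a0 * b1 - a1 * b0))) ∧
    f ((a1 * Q - b0 * b1) / (a0 * b1 - a1 * b0)) =
      Real.sqrt (a1 ^ 2 / a0 + (b1 - b0 * a1 / a0) ^ 2 / (Q - b0 ^ 2 / a0)) := by
  have ha0' : a0 ≠ 0 := ne_of_gt ha0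
  set S : ℝ := a0 * Q - b0 ^ 2 with hS
  set D : ℝ := a0 * b1 - a1 * b0 with hD
  have hSpos : 0 < S := hdisc
  have hSne : S ≠ 0 := ne_of_gt hSpos
  have hDneg : D < 0 := by
    have h1 : a0 * (b1 - b0 * a1 / a0) = D := by field_simp [hD]; ring
    nlinarith [mul_pos ha0 (neg_pos.mpr hF)]
  have hDne : D ≠ 0 := ne_of_lt hDneg
  set ν0 : ℝ := (a1 * Q - b0 * b1) / D with hν0
  have hnu : D * ν0 = a1 * Q - b0 * b1 := by rw [hν0]; field_simp
  clear_value S D ν0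
  -- positivity of the quadratic under the root
  have hq : ∀ ν : ℝ, 0 < Q + 2 * b0 * ν + a0 * ν ^ 2 := by
    intro ν
    nlinarith [sq_nonneg (a0 * ν + b0), hdisc, hS.le, hS.ge]
  set M2 : ℝ := a1 ^ 2 / a0 + (b1 - b0 * a1 / a0) ^ 2 / (Q - b0 ^ 2 / a0) with hM2def
  clear_value M2
  have hQb : Q - b0 ^ 2 / a0 = S / a0 := by field_simp [hS]; linarith
  have hM2 : a0 * S * M2 = a1 ^ 2 * S + D ^ 2 := by
    have h1 : (b1 - b0 * a1 / a0) ^ 2 = D ^ 2 / a0 ^ 2 := by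
      rw [hD]; field_simp
    rw [hM2def, hQb, h1]
    field_simp
  have hM2nonneg : 0 ≤ M2 := by
    have : 0 < a1 ^ 2 * S + D ^ 2 := by positivity
    nlinarith [mul_pos (mul_pos ha0 hSpos) (lt_of_le_of_lt (le_refl (0:ℝ)) (by linarith : (0:ℝ) < 1))]
  -- key polynomial identity
  have key : ∀ ν : ℝ,
      (a1 ^ 2 * S + D ^ 2) * (Q + 2 * b0 * ν + a0 * ν ^ 2) - a0 * S * (b1 + ν * a1) ^ 2
        = a0 * (D * ν - (a1 * Q - b0 * b1)) ^ 2 := by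
    intro ν; rw [hS, hD]; ring
  -- key inequality
  have hineq : ∀ ν : ℝ, (b1 + ν * a1) ^ 2 ≤ M2 * (Q + 2 * b0 * ν + a0 * ν ^ 2) := by
    intro ν
    have h := key ν
    have h2 : 0 ≤ a0 * (D * ν - (a1 * Q - b0 * b1)) ^ 2 := by positivity
    rw [← hM2] at h
    have h3 : a0 * S * ((b1 + ν * a1) ^ 2) ≤ a0 * S * (M2 * (Q + 2 * b0 * ν + a0 * ν ^ 2)) := by
      linarith [h, h2]
    exact le_of_mul_le_mul_left h3 (mul_pos ha0 hSpos)
  -- equality at ν0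
  have heq : (b1 + ν0 * a1) ^ 2 = M2 * (Q + 2 * b0 * ν0 + a0 * ν0 ^ 2) := by
    have h := key ν0
    rw [hnu, ← hM2] at h
    have h3 : a0 * S * ((b1 + ν0 * a1) ^ 2) = a0 * S * (M2 * (Q + 2 * b0 * ν0 + a0 * ν0 ^ 2)) := by
      linarith [h]
    exact mul_left_cancel₀ (ne_of_gt (mul_pos ha0 hSpos)) h3
  -- sign at ν0
  have hsign : b1 + ν0 * a1 < 0 := by
    have h1 : a0 * D * (b1 + ν0 * a1) = D ^ 2 + a1 ^ 2 * S := by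
      have : a0 * D * (b1 + ν0 * a1) = a0 * (D * b1) + a0 * a1 * (D * ν0) := by ring
      rw [this, hnu, hD, hS]; ring
    have h2 : 0 < D ^ 2 + a1 ^ 2 * S := by positivity
    by_contra hc
    push_neg at hc
    have h3 : 0 ≤ (b1 + ν0 * a1) * (-(a0 * D)) :=
      mul_nonneg hc (neg_nonneg.mpr (mul_neg_of_pos_of_neg ha0 hDneg).le)
    nlinarith [h3]
  -- value at ν0
  have hqpos := hq ν0
  have hsq : Real.sqrt (Q + 2 * b0 * ν0 + a0 * ν0 ^ 2) > 0 := Real.sqrt_pos.mpr hqpos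
  have hfν0 : f ν0 = Real.sqrt M2 := by
    rw [hf ν0]
    have hnum : -(b1 + ν0 * a1) = Real.sqrt ((b1 + ν0 * a1) ^ 2) := by
      rw [Real.sqrt_sq_eq_abs, abs_of_neg hsign]
    rw [hnum, heq, Real.sqrt_mul hM2nonneg, mul_div_assoc,
      div_self (ne_of_gt hsq), mul_one]
  -- upper bound
  have hub : ∀ ν : ℝ, f ν ≤ Real.sqrt M2 := by
    intro ν
    rw [hf ν]
    have hqν := hq ν
    have hsqν : (0:ℝ) < Real.sqrt (Q + 2 * b0 * ν + a0 * ν ^ 2) := Real.sqrt_pos.mpr hqν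
    rcases le_or_gt (-(b1 + ν * a1)) 0 with h | h
    · exact le_trans (div_nonpos_of_nonpos_of_nonneg h hsqν.le) (Real.sqrt_nonneg _)
    · rw [div_le_iff₀ hsqν]
      have h1 : -(b1 + ν * a1) = Real.sqrt ((b1 + ν * a1) ^ 2) := by
        rw [Real.sqrt_sq_eq_abs, abs_of_neg (by linarith)]
      rw [h1, ← Real.sqrt_mul hM2nonneg]
      exact Real.sqrt_le_sqrt (hineq ν)
  refine ⟨hDne, ⟨⟨ν0, rfl⟩, ?_⟩, hfν0⟩
  rintro y ⟨ν, rfl⟩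
  rw [hfν0]
  exact hub ν
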